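/- Every synchronizing word of the Černý automaton C_n has length at least (n−1)². -/
import Mathlib


inductive Letter : Type
  | a : Letter
  | b : Letter
deriving DecidableEq

def cernyStep (n : ℕ) : ZMod n → Letter → ZMod n
  | i, Letter.a => if i = 0 then 1 else i
  | i, Letter.b => i + 1

/-- Cyclic interval of length `ℓ` starting at `x`. -/
def Ival (n : ℕ) (x : ZMod n) (ℓ : ℕ) : Set (ZMod n) := {y | ∃ k < ℓ, y = x + (k : ZMod n)}

lemma zmod_cast_inj {n : ℕ} {j k : ℕ} (hj : j < n) (hk : k < n)
    (h : (j : ZMod n) = (k : ZMod n)) : j = k := by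
  have := congrArg ZMod.val h
  rwa [ZMod.val_cast_of_lt hj, ZMod.val_cast_of_lt hk] at this

lemma val_sub_one_ge {n : ℕ} [NeZero n] (y : ZMod n) :
    (y.val : ℤ) - 1 ≤ ((y - 1 : ZMod n).val : ℤ) := by
  rcases eq_or_ne y 0 with rfl | hy
  · have : (0:ℤ) ≤ (((0:ZMod n) - 1).val : ℤ) := Int.natCast_nonneg _
    simp only [ZMod.val_zero]
    omega
  · have h1 : 1 ≤ y.val := ZMod.val_pos.mpr hy
    have : (y - 1 : ZMod n) = ((y.val - 1 : ℕ) : ZMod n) := by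
      rw [Nat.cast_sub h1, ZMod.natCast_zmod_val, Nat.cast_one]
    rw [this, ZMod.val_cast_of_lt (by have := y.val_lt; omega)]
    omega

/-- Every synchronizing word of the Černý automaton `C n` has length at least `(n-1)^2`. -/
theorem stmt6 (n : ℕ) (hn : 2 ≤ n) (w : List Letter)
    (hw : ∃ q0 : ZMod n, ∀ p : ZMod n, w.foldl (cernyStep n) p = q0) :
    (n - 1) ^ 2 ≤ w.length := by
  haveI : NeZero n := ⟨by omega⟩
  obtain ⟨q0, hq⟩ := hw
  have main : ∀ s : List Letter, ∃ (x : ZMod n) (ℓ : ℕ), ℓ ≤ n ∧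
      {p : ZMod n | s.foldl (cernyStep n) p = q0} = Ival n x ℓ ∧
      (ℓ : ℤ) * n ≤ (((x - 1 : ZMod n).val : ℤ)) + n + s.length := by
    intro s
    induction s with
    | nil =>
      refine ⟨q0, 1, by omega, ?_, ?_⟩
      · ext p
        simp only [List.foldl_nil, Set.mem_setOf_eq, Ival]
        constructor
        · rintro rfl; exact ⟨0, by omega, by simp⟩
        · rintro ⟨k, hk, rfl⟩; interval_cases k; simp
      · have := (q0 - 1).val_lt
        push_cast
        omega
    | cons l s ih =>
      obtain ⟨x, ℓ, hℓn, hset, hΦ⟩ := ih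
      have hmem : ∀ p : ZMod n,
          ((l :: s).foldl (cernyStep n) p = q0) ↔ cernyStep n p l ∈ Ival n x ℓ := by
        intro p
        rw [List.foldl_cons, ← hset]
        rfl
      cases l with
      | b =>
        refine ⟨x - 1, ℓ, hℓn, ?_, ?_⟩
        · ext p
          rw [Set.mem_setOf_eq, hmem p]
          simp only [cernyStep, Ival, Set.mem_setOf_eq]
          constructor
          · rintro ⟨k, hk, hpk⟩; exact ⟨k, hk, by rw [← sub_eq_iff_eq_add'] at hpk ⊢; rw [← hpk]; ring⟩
          · rintro ⟨k, hk, rfl⟩; exact ⟨k, hk, by ring⟩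
        · have := val_sub_one_ge (x - 1)
          simp only [List.length_cons]
          push_cast
          omega
      | a =>
        by_cases h1 : (1 : ZMod n) ∈ Ival n x ℓ
        · by_cases h0 : (0 : ZMod n) ∈ Ival n x ℓ
          · -- identity case: both 0 and 1 in the interval
            refine ⟨x, ℓ, hℓn, ?_, ?_⟩
            · ext p
              rw [Set.mem_setOf_eq, hmem p]
              simp only [cernyStep]
              rcases eq_or_ne p 0 with rfl | hp
              · simp [h0, h1]
              · simp [hp]
            · simp only [List.length_cons]; push_cast; push_cast at hΦ; omega
          · -- growth case: 1 ∈ I, 0 ∉ I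
            -- first: x = 1
            obtain ⟨k, hk, hk1⟩ := h1
            have hx1 : x = 1 ∧ k = 0 := by
              rcases Nat.eq_zero_or_pos k with rfl | hkpos
              · constructor
                · simpa using hk1.symm
                · rfl
              · exfalso
                apply h0
                refine ⟨k - 1, by omega, ?_⟩
                have : ((k - 1 : ℕ) : ZMod n) = (k : ZMod n) - 1 := by
                  rw [Nat.cast_sub hkpos, Nat.cast_one]
                rw [this]
                linear_combination hk1
            obtain ⟨rfl, rfl⟩ := hx1
            have hfull : ∀ y : ZMod n, y ∈ Ival n 1 n := fun y =>
              ⟨(y - 1).val, (y - 1).val_lt, by rw [ZMod.natCast_zmod_val]; ring⟩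
            have hℓlt : ℓ < n := by
              rcases lt_or_eq_of_le hℓn with h | heq
              · exact h
              · exact absurd (by rw [heq]; exact hfull 0) h0
            refine ⟨0, ℓ + 1, by omega, ?_, ?_⟩
            · ext p
              rw [Set.mem_setOf_eq, hmem p]
              simp only [cernyStep, Ival, Set.mem_setOf_eq]
              rcases eq_or_ne p 0 with rfl | hp
              · simp only [if_pos rfl]
                constructor
                · intro _; exact ⟨0, by omega, by simp⟩
                · intro _; exact ⟨0, hk, by simp⟩
              · simp only [if_neg hp]
                constructor
                · rintro ⟨j, hj, rfl⟩
                  exact ⟨j + 1, by omega, by push_cast; ring⟩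
                · rintro ⟨j, hj, rfl⟩
                  have hj0 : j ≠ 0 := by rintro rfl; simp at hp
                  refine ⟨j - 1, by omega, ?_⟩
                  have : ((j - 1 : ℕ) : ZMod n) = (j : ZMod n) - 1 := by
                    rw [Nat.cast_sub (by omega), Nat.cast_one]
                  rw [this]
                  ring
            · have hval : ((0 - 1 : ZMod n)).val = n - 1 := by
                have : (0 - 1 : ZMod n) = -1 := by ring
                rw [this]
                rcases n with _ | m
                · omega
                · exact ZMod.val_neg_one m
              have hone : ((1 - 1 : ZMod n)).val = 0 := by
                norm_num
              rw [hone] at hΦ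
              rw [hval]
              simp only [List.length_cons]
              have hexp : ((ℓ:ℤ) + 1) * (n:ℤ) = (ℓ:ℤ) * n + n := by ring
              push_cast
              push_cast at hΦ
              omega
        · by_cases h0 : (0 : ZMod n) ∈ Ival n x ℓ
          · -- deletion case: 0 ∈ I, 1 ∉ I
            obtain ⟨k, hk, hk0⟩ := h0
            have hkend : k = ℓ - 1 := by
              by_contra hne
              apply h1
              refine ⟨k + 1, by omega, ?_⟩
              push_cast
              rw [← add_assoc, ← hk0]
              ring
            subst hkend
            have hℓpos : 1 ≤ ℓ := by omega
            refine ⟨x, ℓ - 1, by omega, ?_, ?_⟩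
            · ext p
              rw [Set.mem_setOf_eq, hmem p]
              simp only [cernyStep, Ival, Set.mem_setOf_eq]
              rcases eq_or_ne p 0 with rfl | hp
              · simp only [if_pos rfl]
                constructor
                · intro hmem1; exact absurd hmem1 h1
                · rintro ⟨j, hj, hj0⟩
                  exfalso
                  have heq2 : ((ℓ - 1 : ℕ) : ZMod n) = (j : ZMod n) :=
                    add_left_cancel (hk0.symm.trans hj0)
                  have := zmod_cast_inj (by omega) (by omega) heq2
                  omega
              · simp only [if_neg hp]
                constructor
                · rintro ⟨j, hj, rfl⟩
                  refine ⟨j, ?_, rfl⟩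
                  rcases Nat.lt_or_ge j (ℓ - 1) with h | h
                  · exact h
                  · exfalso
                    have : j = ℓ - 1 := by omega
                    subst this
                    exact hp hk0.symm
                · rintro ⟨j, hj, rfl⟩
                  exact ⟨j, by omega, rfl⟩
            · simp only [List.length_cons]
              have : ((ℓ - 1 : ℕ) : ℤ) ≤ (ℓ : ℤ) := by push_cast; omega
              push_cast at hΦ ⊢
              nlinarith [hΦ, (show (0:ℤ) ≤ n by positivity)]
          · -- identity case: neither 0 nor 1 in the interval
            refine ⟨x, ℓ, hℓn, ?_, ?_⟩
            · ext p
              rw [Set.mem_setOf_eq, hmem p]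
              simp only [cernyStep]
              rcases eq_or_ne p 0 with rfl | hp
              · simp [h0, h1]
              · simp [hp]
            · simp only [List.length_cons]; push_cast; push_cast at hΦ; omega
  obtain ⟨x, ℓ, hℓn, hset, hΦ⟩ := main w
  have hℓ : ℓ = n := by
    by_contra hne
    have hℓlt : ℓ < n := lt_of_le_of_ne hℓn hne
    have : x + (ℓ : ZMod n) ∈ Ival n x ℓ := by
      rw [← hset]
      exact hq _
    obtain ⟨k, hk, hkeq⟩ := this
    have : (ℓ : ZMod n) = (k : ZMod n) := add_left_cancel hkeq
    have := zmod_cast_inj hℓlt (by omega) this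
    omega
  rw [hℓ] at hΦ
  have hd : ((x - 1 : ZMod n)).val < n := (x - 1).val_lt
  have h2 : ((n - 1 : ℕ) : ℤ) = (n : ℤ) - 1 := by push_cast [Nat.cast_sub (by omega : 1 ≤ n)]; ring
  have : ((n - 1 : ℕ) : ℤ) ^ 2 ≤ (w.length : ℤ) := by
    rw [h2]
    nlinarith [hΦ, hd]
  exact_mod_cast this
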